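/- arXiv:0810.0851 — 2 statements merged into one kernel-verified Lean document; each statement's English description precedes it below -/
import Mathlib

section
/- Let a, b be integers with a ≥ 1, b ≥ 1 and a*b ≥ 4, let c, d be the associated recursive sequences and g n = gcd(c n, d n). Let p be a prime that divides exactly one of a and b. Then 2*p is the smallest positive integer k such that p divides g k; that is, p divides g (2*p), and p does not divide g m for any m with 0 < m < 2*p. -/
/-- The pair of recursive sequences `(c n, d n)` associated to a generalized
Cartan matrix of rank two with off-diagonal entries `-a`, `-b`:
`c 0 = d 0 = 0`, `c 1 = d 1 = 1`, `c (j+1) = a * d j - c (j-1)`,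
`d (j+1) = b * c j - d (j-1)`. -/
def KMcd (a b : ℤ) : ℕ → ℤ × ℤ
  | 0 => (0, 0)
  | 1 => (1, 1)
  | n + 2 => (a * (KMcd a b (n + 1)).2 - (KMcd a b n).1,
              b * (KMcd a b (n + 1)).1 - (KMcd a b n).2)

/-- The sequence `c`. -/
def KMc (a b : ℤ) (n : ℕ) : ℤ := (KMcd a b n).1

/-- The sequence `d`. -/
def KMd (a b : ℤ) (n : ℕ) : ℤ := (KMcd a b n).2

/-- `g n = gcd (c n) (d n)`. -/
def KMg (a b : ℤ) (n : ℕ) : ℕ := Int.gcd (KMc a b n) (KMd a b n)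

lemma KMc_add_two (a b : ℤ) (n : ℕ) :
    KMc a b (n+2) = a * KMd a b (n+1) - KMc a b n := rfl
lemma KMd_add_two (a b : ℤ) (n : ℕ) :
    KMd a b (n+2) = b * KMc a b (n+1) - KMd a b n := rfl

lemma KMcd_swap (a b : ℤ) : ∀ n, KMcd b a n = ((KMcd a b n).2, (KMcd a b n).1) := by
  have h : ∀ n, KMcd b a n = ((KMcd a b n).2, (KMcd a b n).1) ∧
      KMcd b a (n+1) = ((KMcd a b (n+1)).2, (KMcd a b (n+1)).1) := by
    intro n
    induction n with
    | zero => simp [KMcd]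
    | succ k ih => exact ⟨ih.2, by simp [KMcd, ih.1, ih.2]⟩
  exact fun n => (h n).1

lemma dvd_KMg_iff (a b : ℤ) (p n : ℕ) :
    p ∣ KMg a b n ↔ (p:ℤ) ∣ KMc a b n ∧ (p:ℤ) ∣ KMd a b n := by
  unfold KMg
  constructor
  · intro h
    exact ⟨(Int.natCast_dvd_natCast.2 h).trans (Int.gcd_dvd_left _ _),
           (Int.natCast_dvd_natCast.2 h).trans (Int.gcd_dvd_right _ _)⟩
  · rintro ⟨h1, h2⟩
    exact Int.natCast_dvd_natCast.1 (Int.dvd_coe_gcd h1 h2)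

lemma key_mod (a b : ℤ) (p : ℕ) (hpa : (a : ZMod p) = 0) : ∀ k : ℕ,
    (((KMc a b (2*k) : ℤ) : ZMod p) = 0 ∧ ((KMc a b (2*k+1) : ℤ) : ZMod p) = (-1)^k ∧
     ((KMd a b (2*k) : ℤ) : ZMod p) = (-1)^(k+1) * (k : ZMod p) * (b : ZMod p) ∧
     ((KMd a b (2*k+1) : ℤ) : ZMod p) = (-1)^k) := by
  intro k
  induction k with
  | zero => simp [KMc, KMd, KMcd]
  | succ k ih =>
    obtain ⟨h1, h2, h3, h4⟩ := ih
    have hc2 : ((KMc a b (2*k+2) : ℤ) : ZMod p) = 0 := by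
      rw [KMc_add_two]; push_cast; rw [hpa, h1]; ring
    have hd2 : ((KMd a b (2*k+2) : ℤ) : ZMod p)
        = (-1)^(k+1+1) * ((k:ZMod p)+1) * (b : ZMod p) := by
      rw [KMd_add_two]; push_cast; rw [h2, h3]; ring
    have hc3 : ((KMc a b (2*k+1+2) : ℤ) : ZMod p) = (-1)^(k+1) := by
      rw [KMc_add_two]; push_cast; rw [hpa, h2]; ring
    have hd3 : ((KMd a b (2*k+1+2) : ℤ) : ZMod p) = (-1)^(k+1) := by
      rw [KMd_add_two, show 2*k+1+1 = 2*k+2 by omega]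
      push_cast
      rw [hc2, h4]; ring
    refine ⟨?_, ?_, ?_, ?_⟩
    · rw [show 2*(k+1) = 2*k+2 by ring]; exact hc2
    · rw [show 2*(k+1)+1 = 2*k+1+2 by ring]; exact hc3
    · rw [show 2*(k+1) = 2*k+2 by ring, hd2]; push_cast; ring
    · rw [show 2*(k+1)+1 = 2*k+1+2 by ring]; exact hd3

lemma key_case (a b : ℤ) (p : ℕ) (hp : p.Prime)
    (hpa : (p:ℤ) ∣ a) (hpb : ¬ (p:ℤ) ∣ b) :
    p ∣ KMg a b (2 * p) ∧ ∀ m : ℕ, 0 < m → m < 2 * p → ¬ p ∣ KMg a b m := by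
  haveI := Fact.mk hp
  have hpa' : (a : ZMod p) = 0 := (ZMod.intCast_zmod_eq_zero_iff_dvd a p).2 hpa
  have hb0 : (b : ZMod p) ≠ 0 := fun h => hpb ((ZMod.intCast_zmod_eq_zero_iff_dvd b p).1 h)
  have key := key_mod a b p hpa'
  constructor
  · rw [dvd_KMg_iff]
    constructor
    · rw [← ZMod.intCast_zmod_eq_zero_iff_dvd]
      exact (key p).1
    · rw [← ZMod.intCast_zmod_eq_zero_iff_dvd, (key p).2.2.1]
      simp [ZMod.natCast_self]
  · intro m hm0 hm hdvd
    rw [dvd_KMg_iff] at hdvd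
    rcases Nat.even_or_odd m with ⟨k, hk⟩ | ⟨k, hk⟩
    · subst hk
      have hk0 : 0 < k := by omega
      have hd := hdvd.2
      rw [← ZMod.intCast_zmod_eq_zero_iff_dvd, show k + k = 2*k by ring,
        (key k).2.2.1] at hd
      have hk0' : (k : ZMod p) ≠ 0 := by
        rw [Ne, ZMod.natCast_eq_zero_iff]
        exact fun h => absurd (Nat.le_of_dvd hk0 h) (by omega)
      have hneg : ((-1 : ZMod p))^(k+1) ≠ 0 :=
        pow_ne_zero _ (neg_ne_zero.2 one_ne_zero)
      exact (mul_ne_zero (mul_ne_zero hneg hk0') hb0) hd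
    · subst hk
      have hc := hdvd.1
      rw [← ZMod.intCast_zmod_eq_zero_iff_dvd, (key k).2.1] at hc
      exact pow_ne_zero k (neg_ne_zero.2 one_ne_zero) hc

theorem smallest_k_eq_two_p_of_divides_exactly_one
    (a b : ℤ) (ha : 1 ≤ a) (hb : 1 ≤ b) (hab : 4 ≤ a * b)
    (p : ℕ) (hp : p.Prime)
    (hone : ((p : ℤ) ∣ a ∧ ¬ (p : ℤ) ∣ b) ∨ (¬ (p : ℤ) ∣ a ∧ (p : ℤ) ∣ b)) :
    p ∣ KMg a b (2 * p) ∧ ∀ m : ℕ, 0 < m → m < 2 * p → ¬ p ∣ KMg a b m := by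
  have hgswap : ∀ n, KMg a b n = KMg b a n := by
    intro n
    unfold KMg KMc KMd
    rw [KMcd_swap a b n]
    exact (Int.gcd_comm _ _)
  rcases hone with ⟨h1, h2⟩ | ⟨h1, h2⟩
  · exact key_case a b p hp h1 h2
  · obtain ⟨hg, hm⟩ := key_case b a p hp h2 h1
    exact ⟨by rwa [hgswap], fun m h0 hlt => by rw [hgswap]; exact hm m h0 hlt⟩
end

section
/- Let a, b be integers with a ≥ 1, b ≥ 1 and a*b ≥ 4, and let d be the associated recursive sequence. Then for all natural numbers n and m, the product (∏_{i=1}^{n} d i) * (∏_{i=1}^{m} d i) divides ∏_{i=1}^{n+m} d i in ℤ; equivalently, the generalized binomial coefficient D(n,m) = (d_{n+m} · d_{n+m−1} ⋯ d_1) / ((d_n ⋯ d_1)(d_m ⋯ d_1)) is an integer. -/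
section aux

variable (a b : ℤ)

lemma KMc_zero : KMc a b 0 = 0 := rfl
lemma KMd_zero : KMd a b 0 = 0 := rfl
lemma KMc_one : KMc a b 1 = 1 := rfl
lemma KMd_one : KMd a b 1 = 1 := rfl

lemma KMc_rec (j : ℕ) : KMc a b (j + 2) = a * KMd a b (j + 1) - KMc a b j := rfl
lemma KMd_rec (j : ℕ) : KMd a b (j + 2) = b * KMc a b (j + 1) - KMd a b j := rfl

/-- parity lemma: `c` and `d` agree at odd indices, and `a*d = b*c` at even indices. -/
lemma KM_parity : ∀ k : ℕ, KMc a b (2 * k + 1) = KMd a b (2 * k + 1) ∧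
    a * KMd a b (2 * k) = b * KMc a b (2 * k) := by
  intro k
  induction k with
  | zero => simp [KMc_one, KMd_one, KMc_zero, KMd_zero]
  | succ k ih =>
    obtain ⟨h1, h2⟩ := ih
    have hd2 : KMd a b (2 * k + 2) = b * KMc a b (2 * k + 1) - KMd a b (2 * k) :=
      KMd_rec a b (2 * k)
    have hc2 : KMc a b (2 * k + 2) = a * KMd a b (2 * k + 1) - KMc a b (2 * k) :=
      KMc_rec a b (2 * k)
    have hd3 : KMd a b (2 * k + 3) = b * KMc a b (2 * k + 2) - KMd a b (2 * k + 1) :=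
      KMd_rec a b (2 * k + 1)
    have hc3 : KMc a b (2 * k + 3) = a * KMd a b (2 * k + 2) - KMc a b (2 * k + 1) :=
      KMc_rec a b (2 * k + 1)
    constructor
    · show KMc a b (2 * k + 3) = KMd a b (2 * k + 3)
      linear_combination hc3 - hd3 + a * hd2 - b * hc2 + (a * b - 1) * h1 - h2
    · show a * KMd a b (2 * k + 2) = b * KMc a b (2 * k + 2)
      linear_combination a * hd2 - b * hc2 + a * b * h1 - h2

lemma KM_codd {j : ℕ} (hj : Odd j) : KMc a b j = KMd a b j := by
  obtain ⟨k, hk⟩ := hj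
  have : j = 2 * k + 1 := by omega
  rw [this]; exact (KM_parity a b k).1

lemma KM_ceven {j : ℕ} (hj : Even j) : a * KMd a b j = b * KMc a b j := by
  obtain ⟨k, hk⟩ := hj
  have : j = 2 * k := by omega
  rw [this]; exact (KM_parity a b k).2

end aux

/-- Auxiliary statement: the addition formulas for `c` and `d`, whose shape
depends on the parity of `n + j` (here `m = j + 1`). -/
def KMP (a b : ℤ) (n j : ℕ) : Prop :=
  (Even (n + j) →
    KMd a b (n + j + 1) = KMc a b (n + 1) * KMd a b (j + 1) - KMc a b n * KMd a b j ∧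
    KMc a b (n + j + 1) = KMd a b (n + 1) * KMc a b (j + 1) - KMd a b n * KMc a b j) ∧
  (¬ Even (n + j) →
    KMd a b (n + j + 1) = KMd a b (n + 1) * KMd a b (j + 1) - KMd a b n * KMd a b j ∧
    KMc a b (n + j + 1) = KMc a b (n + 1) * KMc a b (j + 1) - KMc a b n * KMc a b j)

lemma KM_add (a b : ℤ) (n : ℕ) : ∀ j : ℕ, KMP a b n j := by
  have base0 : KMP a b n 0 := by
    constructor
    · intro h
      rw [Nat.add_zero] at h
      have e : KMc a b (n + 1) = KMd a b (n + 1) := KM_codd a b (Even.add_one h)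
      constructor
      · show KMd a b (n + 1) = KMc a b (n + 1) * KMd a b 1 - KMc a b n * KMd a b 0
        rw [KMd_one, KMd_zero, e]; ring
      · show KMc a b (n + 1) = KMd a b (n + 1) * KMc a b 1 - KMd a b n * KMc a b 0
        rw [KMc_one, KMc_zero, e]; ring
    · intro _
      constructor
      · show KMd a b (n + 1) = KMd a b (n + 1) * KMd a b 1 - KMd a b n * KMd a b 0
        rw [KMd_one, KMd_zero]; ring
      · show KMc a b (n + 1) = KMc a b (n + 1) * KMc a b 1 - KMc a b n * KMc a b 0
        rw [KMc_one, KMc_zero]; ring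
  have hd2v : KMd a b 2 = b := by
    have := KMd_rec a b 0
    rw [KMc_one, KMd_zero] at this; simpa using this
  have hc2v : KMc a b 2 = a := by
    have := KMc_rec a b 0
    rw [KMd_one, KMc_zero] at this; simpa using this
  have base1 : KMP a b n 1 := by
    have hdrec : KMd a b (n + 2) = b * KMc a b (n + 1) - KMd a b n := KMd_rec a b n
    have hcrec : KMc a b (n + 2) = a * KMd a b (n + 1) - KMc a b n := KMc_rec a b n
    constructor
    · intro h
      have hn : Odd n := by
        rcases Nat.even_or_odd n with he | ho
        · exact absurd h (by simpa [Nat.even_add_one] using he)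
        · exact ho
      have e : KMc a b n = KMd a b n := KM_codd a b hn
      constructor
      · show KMd a b (n + 2) = KMc a b (n + 1) * KMd a b 2 - KMc a b n * KMd a b 1
        rw [hd2v, KMd_one, hdrec, e]; ring
      · show KMc a b (n + 2) = KMd a b (n + 1) * KMc a b 2 - KMd a b n * KMc a b 1
        rw [hc2v, KMc_one, hcrec, e]; ring
    · intro h
      have hn : Even n := by
        rcases Nat.even_or_odd n with he | ho
        · exact he
        · exact absurd (by simpa [Nat.even_add_one, Nat.not_even_iff_odd] using ho) h
      have e : KMc a b (n + 1) = KMd a b (n + 1) := KM_codd a b (Even.add_one hn)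
      constructor
      · show KMd a b (n + 2) = KMd a b (n + 1) * KMd a b 2 - KMd a b n * KMd a b 1
        rw [hd2v, KMd_one, hdrec, e]; ring
      · show KMc a b (n + 2) = KMc a b (n + 1) * KMc a b 2 - KMc a b n * KMc a b 1
        rw [hc2v, KMc_one, hcrec, ← e]; ring
  have step : ∀ j : ℕ, KMP a b n j → KMP a b n (j + 1) → KMP a b n (j + 2) := by
    intro j ihj ihj1
    have hdrecN : KMd a b (n + j + 3) = b * KMc a b (n + j + 2) - KMd a b (n + j + 1) :=
      KMd_rec a b (n + j + 1)
    have hcrecN : KMc a b (n + j + 3) = a * KMd a b (n + j + 2) - KMc a b (n + j + 1) :=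
      KMc_rec a b (n + j + 1)
    have hdrec1 : KMd a b (j + 3) = b * KMc a b (j + 2) - KMd a b (j + 1) := KMd_rec a b (j + 1)
    have hcrec1 : KMc a b (j + 3) = a * KMd a b (j + 2) - KMc a b (j + 1) := KMc_rec a b (j + 1)
    have hdrec0 : KMd a b (j + 2) = b * KMc a b (j + 1) - KMd a b j := KMd_rec a b j
    have hcrec0 : KMc a b (j + 2) = a * KMd a b (j + 1) - KMc a b j := KMc_rec a b j
    constructor
    · intro h
      have h0 : Even (n + j) := by
        rw [show n + (j + 2) = n + j + 2 from rfl] at h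
        simpa [Nat.even_add_one] using h
      have h1 : ¬ Even (n + (j + 1)) := by
        rw [show n + (j + 1) = n + j + 1 from rfl]
        simpa [Nat.even_add_one] using h0
      obtain ⟨A1d, A1c⟩ := ihj.1 h0
      obtain ⟨A2d, A2c⟩ : KMd a b (n + j + 2) = KMd a b (n + 1) * KMd a b (j + 2) -
            KMd a b n * KMd a b (j + 1) ∧
          KMc a b (n + j + 2) = KMc a b (n + 1) * KMc a b (j + 2) -
            KMc a b n * KMc a b (j + 1) := ihj1.2 h1
      constructor
      · show KMd a b (n + j + 3) = KMc a b (n + 1) * KMd a b (j + 3) - KMc a b n * KMd a b (j + 2)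
        linear_combination hdrecN + b * A2c - A1d - KMc a b (n + 1) * hdrec1 + KMc a b n * hdrec0
      · show KMc a b (n + j + 3) = KMd a b (n + 1) * KMc a b (j + 3) - KMd a b n * KMc a b (j + 2)
        linear_combination hcrecN + a * A2d - A1c - KMd a b (n + 1) * hcrec1 + KMd a b n * hcrec0
    · intro h
      have h0 : ¬ Even (n + j) := by
        rw [show n + (j + 2) = n + j + 2 from rfl] at h
        simpa [Nat.even_add_one] using h
      have h1 : Even (n + (j + 1)) := by
        rw [show n + (j + 1) = n + j + 1 from rfl]
        simpa [Nat.even_add_one] using h0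
      obtain ⟨A1d, A1c⟩ := ihj.2 h0
      obtain ⟨A2d, A2c⟩ : KMd a b (n + j + 2) = KMc a b (n + 1) * KMd a b (j + 2) -
            KMc a b n * KMd a b (j + 1) ∧
          KMc a b (n + j + 2) = KMd a b (n + 1) * KMc a b (j + 2) -
            KMd a b n * KMc a b (j + 1) := ihj1.1 h1
      constructor
      · show KMd a b (n + j + 3) = KMd a b (n + 1) * KMd a b (j + 3) - KMd a b n * KMd a b (j + 2)
        linear_combination hdrecN + b * A2c - A1d - KMd a b (n + 1) * hdrec1 + KMd a b n * hdrec0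
      · show KMc a b (n + j + 3) = KMc a b (n + 1) * KMc a b (j + 3) - KMc a b n * KMc a b (j + 2)
        linear_combination hcrecN + a * A2d - A1c - KMc a b (n + 1) * hcrec1 + KMc a b n * hcrec0
  have main : ∀ j : ℕ, KMP a b n j ∧ KMP a b n (j + 1) := by
    intro j
    induction j with
    | zero => exact ⟨base0, base1⟩
    | succ j ih => exact ⟨ih.2, step j ih.1 ih.2⟩
  exact fun j => (main j).1

lemma KM_cross (a b : ℤ) (hb : b ≠ 0) {n j : ℕ} (h : Even (n + j)) :
    KMc a b n * KMd a b j = KMc a b j * KMd a b n := by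
  rcases Nat.even_or_odd n with he | ho
  · have hj : Even j := (Nat.even_add.mp h).mp he
    have h1 := KM_ceven a b he
    have h2 := KM_ceven a b hj
    apply mul_left_cancel₀ hb
    linear_combination KMd a b n * h2 - KMd a b j * h1
  · have hj : Odd j := by
      rcases Nat.even_or_odd j with hje | hjo
      · exact absurd ((Nat.even_add.mp h).mpr hje) (Nat.not_even_iff_odd.mpr ho)
      · exact hjo
    rw [KM_codd a b ho, KM_codd a b hj, mul_comm]

lemma KM_exists (a b : ℤ) (hb : b ≠ 0) (n j : ℕ) :
    ∃ A B : ℤ, KMd a b (n + (j + 1)) = A * KMd a b n + B * KMd a b (j + 1) := by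
  by_cases h : Even (n + j)
  · obtain ⟨hd, -⟩ := (KM_add a b n j).1 h
    refine ⟨-KMc a b j, KMc a b (n + 1), ?_⟩
    have hcr := KM_cross a b hb h
    show KMd a b (n + j + 1) = _
    linear_combination hd - hcr
  · obtain ⟨hd, -⟩ := (KM_add a b n j).2 h
    refine ⟨-KMd a b j, KMd a b (n + 1), ?_⟩
    show KMd a b (n + j + 1) = _
    linear_combination hd

theorem generalized_binomial_D_integral
    (a b : ℤ) (ha : 1 ≤ a) (hb : 1 ≤ b) (hab : 4 ≤ a * b) :
    ∀ n m : ℕ,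
      (∏ i ∈ Finset.Icc 1 n, KMd a b i) * (∏ i ∈ Finset.Icc 1 m, KMd a b i) ∣
        ∏ i ∈ Finset.Icc 1 (n + m), KMd a b i := by
  have hb0 : b ≠ 0 := by omega
  suffices H : ∀ k n m : ℕ, n + m = k →
      (∏ i ∈ Finset.Icc 1 n, KMd a b i) * (∏ i ∈ Finset.Icc 1 m, KMd a b i) ∣
        ∏ i ∈ Finset.Icc 1 (n + m), KMd a b i by
    intro n m; exact H (n + m) n m rfl
  intro k
  induction k using Nat.strong_induction_on with
  | _ k ih =>
    intro n m hk
    match n, m with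
    | 0, m => simp
    | n + 1, 0 => simp
    | n + 1, m + 1 =>
      obtain ⟨A, B, hAB⟩ := KM_exists a b hb0 (n + 1) m
      have hAB' : KMd a b (n + m + 1 + 1) =
          A * KMd a b (n + 1) + B * KMd a b (m + 1) := by
        rw [show n + m + 1 + 1 = n + 1 + (m + 1) from by omega]; exact hAB
      have ihm : (∏ i ∈ Finset.Icc 1 n, KMd a b i) * (∏ i ∈ Finset.Icc 1 (m + 1), KMd a b i) ∣
          ∏ i ∈ Finset.Icc 1 (n + m + 1), KMd a b i := by
        have := ih (n + m + 1) (by omega) n (m + 1) (by omega)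
        rwa [show n + (m + 1) = n + m + 1 from by omega] at this
      have ihn : (∏ i ∈ Finset.Icc 1 (n + 1), KMd a b i) * (∏ i ∈ Finset.Icc 1 m, KMd a b i) ∣
          ∏ i ∈ Finset.Icc 1 (n + m + 1), KMd a b i := by
        have := ih (n + m + 1) (by omega) (n + 1) m (by omega)
        rwa [show n + 1 + m = n + m + 1 from by omega] at this
      have h1 : (∏ i ∈ Finset.Icc 1 (n + 1), KMd a b i) *
            (∏ i ∈ Finset.Icc 1 (m + 1), KMd a b i) ∣
          KMd a b (n + 1) * ∏ i ∈ Finset.Icc 1 (n + m + 1), KMd a b i := by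
        have e1 : (∏ i ∈ Finset.Icc 1 (n + 1), KMd a b i) *
            (∏ i ∈ Finset.Icc 1 (m + 1), KMd a b i) =
            KMd a b (n + 1) *
              ((∏ i ∈ Finset.Icc 1 n, KMd a b i) * ∏ i ∈ Finset.Icc 1 (m + 1), KMd a b i) := by
          rw [Finset.prod_Icc_succ_top (by omega : 1 ≤ n + 1)]; ring
        rw [e1]
        exact mul_dvd_mul_left _ ihm
      have h2 : (∏ i ∈ Finset.Icc 1 (n + 1), KMd a b i) *
            (∏ i ∈ Finset.Icc 1 (m + 1), KMd a b i) ∣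
          KMd a b (m + 1) * ∏ i ∈ Finset.Icc 1 (n + m + 1), KMd a b i := by
        have e2 : (∏ i ∈ Finset.Icc 1 (n + 1), KMd a b i) *
            (∏ i ∈ Finset.Icc 1 (m + 1), KMd a b i) =
            KMd a b (m + 1) *
              ((∏ i ∈ Finset.Icc 1 (n + 1), KMd a b i) * ∏ i ∈ Finset.Icc 1 m, KMd a b i) := by
          rw [Finset.prod_Icc_succ_top (by omega : 1 ≤ m + 1)]; ring
        rw [e2]
        exact mul_dvd_mul_left _ ihn
      have key : ∏ i ∈ Finset.Icc 1 (n + 1 + (m + 1)), KMd a b i =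
          A * (KMd a b (n + 1) * ∏ i ∈ Finset.Icc 1 (n + m + 1), KMd a b i) +
          B * (KMd a b (m + 1) * ∏ i ∈ Finset.Icc 1 (n + m + 1), KMd a b i) := by
        rw [show n + 1 + (m + 1) = n + m + 1 + 1 from by omega,
          Finset.prod_Icc_succ_top (by omega : 1 ≤ n + m + 1 + 1), hAB']
        ring
      rw [key]
      exact dvd_add (Dvd.dvd.mul_left h1 A) (Dvd.dvd.mul_left h2 B)
end
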